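/- Let $n \ge 1$. Let $V : \mathbb{Z} \to \mathbb{C}^3$ and $a, b : \mathbb{Z} \to \mathbb{C}$ with $a_i \neq 0$ and $b_i \neq 0$ for all $i$, such that for every $i \in \mathbb{Z}$: $\det(V_i, V_{i+1}, V_{i+2}) = 1$ (determinant of the matrix with these columns) and $V_{i+3} = a_i V_{i+2} + b_i V_{i+1} + V_i$. Let $\tilde{M}$ be an invertible $3 \times 3$ complex matrix and $t : \mathbb{Z} \to \mathbb{C}$ satisfy $\tilde{M} V_i = t_i V_{i+n}$ for all $i$. Define $x_i := a_{i-2}/(b_{i-2} b_{i-1})$, $y_i := -b_{i-1}/(a_{i-2} a_{i-1})$, and $L_j := \begin{pmatrix} 0 & 0 & 1 \\ -x_j y_j & 0 & 1 \\ 0 & -y_j & 1 \end{pmatrix}$. Then for every $i \in \mathbb{Z}$ there exist $c \in \mathbb{C}$, $c \neq 0$, and an invertible $3 \times 3$ complex matrix $P$ such that $L_i L_{i+1} \cdots L_{i+n-1} = c \, P^{-1} \tilde{M} P$. -/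
import Mathlib


open Matrix

/-- The 3×3 matrix whose columns are the vectors `v0, v1, v2`. -/
def colMat (v0 v1 v2 : Fin 3 → ℂ) : Matrix (Fin 3) (Fin 3) ℂ :=
  Matrix.of fun i j => ![v0, v1, v2] j i

/-- Corner invariant `x_j` in terms of the recurrence coefficients. -/
noncomputable def xCorner (a b : ℤ → ℂ) (j : ℤ) : ℂ := a (j - 2) / (b (j - 2) * b (j - 1))

/-- Corner invariant `y_j` in terms of the recurrence coefficients. -/
noncomputable def yCorner (a b : ℤ → ℂ) (j : ℤ) : ℂ := -(b (j - 1)) / (a (j - 2) * a (j - 1))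

/-- The Lax matrix `L_j` in terms of the corner invariants. -/
noncomputable def Lmat (a b : ℤ → ℂ) (j : ℤ) : Matrix (Fin 3) (Fin 3) ℂ :=
  !![0, 0, 1; -(xCorner a b j * yCorner a b j), 0, 1; 0, -(yCorner a b j), 1]

def Tmat (a b : ℤ → ℂ) (j : ℤ) : Matrix (Fin 3) (Fin 3) ℂ := !![0,0,1; 1,0,b j; 0,1,a j]

noncomputable def Emat (a b : ℤ → ℂ) (d : ℂ) (j : ℤ) : Matrix (Fin 3) (Fin 3) ℂ :=
  Matrix.diagonal ![d / a (j-2), d * b (j-2) / a (j-2), d]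

lemma Emat_isUnit (a b : ℤ → ℂ) (ha : ∀ i, a i ≠ 0) (hb : ∀ i, b i ≠ 0) (d : ℂ)
    (hd : d ≠ 0) (j : ℤ) : IsUnit (Emat a b d j).det := by
  rw [Emat, Matrix.det_diagonal, Fin.prod_univ_three]
  simp only [Matrix.cons_val_zero, Matrix.cons_val_one, Matrix.head_cons,
    Matrix.cons_val_two, Matrix.tail_cons]
  apply IsUnit.mul
  apply IsUnit.mul
  · exact (isUnit_iff_ne_zero.2 (div_ne_zero hd (ha _)))
  · exact (isUnit_iff_ne_zero.2 (div_ne_zero (mul_ne_zero hd (hb _)) (ha _)))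
  · exact isUnit_iff_ne_zero.2 hd

lemma EL_eq (a b : ℤ → ℂ) (ha : ∀ i, a i ≠ 0) (hb : ∀ i, b i ≠ 0) (d : ℂ) (j : ℤ) :
    Emat a b d j * Lmat a b j = Tmat a b (j-2) * Emat a b (d / a (j-2)) (j+1) := by
  have e1 : j + 1 - 2 = j - 1 := by ring
  have e2 : j - 2 - 2 = j - 4 := by ring
  ext p q
  fin_cases p <;> fin_cases q <;>
    simp [Emat, Tmat, Lmat, xCorner, yCorner, Matrix.mul_apply, Fin.sum_univ_three,
      Matrix.diagonal, e1] <;>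
    field_simp [ha, hb] <;> ring

lemma ofFn_prod_succ (f : ℤ → Matrix (Fin 3) (Fin 3) ℂ) (i : ℤ) (n : ℕ) :
    (List.ofFn fun k : Fin (n+1) => f (i + (k : ℕ))).prod
      = f i * (List.ofFn fun k : Fin n => f ((i+1) + (k : ℕ))).prod := by
  rw [List.ofFn_succ, List.prod_cons]
  have h1 : f (i + (((0 : Fin (n+1))) : ℕ)) = f i := by norm_num
  have h2 : (fun k : Fin n => f (i + ((Fin.succ k : Fin (n+1)) : ℕ)))
      = fun k : Fin n => f ((i+1) + (k : ℕ)) := by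
    funext k; congr 1; simp [Fin.val_succ]; push_cast; ring
  rw [h1, h2]

lemma colMat_mul_T (V : ℤ → Fin 3 → ℂ) (a b : ℤ → ℂ)
    (hrec : ∀ i : ℤ, V (i + 3) = a i • V (i + 2) + b i • V (i + 1) + V i) (j : ℤ) :
    colMat (V j) (V (j+1)) (V (j+2)) * Tmat a b j
      = colMat (V (j+1)) (V (j+2)) (V (j+3)) := by
  have h := hrec j
  ext p q
  fin_cases q <;>
    simp [colMat, Tmat, Matrix.mul_apply, Fin.sum_univ_three, h, Pi.add_apply, Pi.smul_apply] <;>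
    ring

lemma N_prod (V : ℤ → Fin 3 → ℂ) (a b : ℤ → ℂ)
    (hrec : ∀ i : ℤ, V (i + 3) = a i • V (i + 2) + b i • V (i + 1) + V i) (n : ℕ) :
    ∀ j : ℤ, colMat (V j) (V (j+1)) (V (j+2)) * (List.ofFn fun k : Fin n => Tmat a b (j + (k : ℕ))).prod
      = colMat (V (j+n)) (V (j+n+1)) (V (j+n+2)) := by
  induction n with
  | zero => intro j; simp
  | succ m ih =>
    intro j
    rw [ofFn_prod_succ, ← Matrix.mul_assoc, colMat_mul_T V a b hrec j]
    have := ih (j+1)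
    rw [show j+1+1 = j+2 from by ring, show j+1+2 = j+3 from by ring] at this
    rw [this]
    congr 2 <;> push_cast <;> ring

lemma L_prod (a b : ℤ → ℂ) (ha : ∀ i, a i ≠ 0) (hb : ∀ i, b i ≠ 0) (n : ℕ) :
    ∀ (i : ℤ) (d : ℂ), d ≠ 0 →
    ∃ d' : ℂ, d' ≠ 0 ∧
      Emat a b d i * (List.ofFn fun k : Fin n => Lmat a b (i + (k : ℕ))).prod
        = (List.ofFn fun k : Fin n => Tmat a b (i - 2 + (k : ℕ))).prod * Emat a b d' (i + n) := by
  induction n with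
  | zero => intro i d hd; exact ⟨d, hd, by simp⟩
  | succ m ih =>
    intro i d hd
    obtain ⟨d', hd', hEq⟩ := ih (i+1) (d / a (i-2)) (div_ne_zero hd (ha _))
    refine ⟨d', hd', ?_⟩
    rw [ofFn_prod_succ, ofFn_prod_succ, ← Matrix.mul_assoc, EL_eq a b ha hb d i,
      Matrix.mul_assoc, hEq, show i - 2 + 1 = i + 1 - 2 from by ring, ← Matrix.mul_assoc]
    congr 2 <;> push_cast <;> ring

lemma colMat_mulVec (v0 v1 v2 : Fin 3 → ℂ) (c : Fin 3 → ℂ) :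
    (colMat v0 v1 v2).mulVec c = c 0 • v0 + c 1 • v1 + c 2 • v2 := by
  funext p
  simp [colMat, Matrix.mulVec, dotProduct, Fin.sum_univ_three]
  ring

lemma M_mul_N (V : ℤ → Fin 3 → ℂ) (M : Matrix (Fin 3) (Fin 3) ℂ) (t : ℤ → ℂ) (n : ℕ)
    (hmon : ∀ i : ℤ, M.mulVec (V i) = t i • V (i + n)) (j : ℤ) :
    M * colMat (V j) (V (j+1)) (V (j+2))
      = colMat (V (j+n)) (V (j+n+1)) (V (j+n+2)) * Matrix.diagonal ![t j, t (j+1), t (j+2)] := by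
  ext p q
  have h0 := congrFun (hmon j) p
  have h1 := congrFun (hmon (j+1)) p
  have h2 := congrFun (hmon (j+2)) p
  simp [Matrix.mulVec, dotProduct, Fin.sum_univ_three, colMat] at h0 h1 h2
  rw [Matrix.mul_diagonal]
  fin_cases q <;>
    simp [Matrix.mul_apply, Fin.sum_univ_three, colMat, h0, h1, h2,
      show j+1+(n:ℤ) = j+n+1 from by ring, show j+2+(n:ℤ) = j+n+2 from by ring] <;>
    ring

lemma t_ne_zero (V : ℤ → Fin 3 → ℂ) (M : Matrix (Fin 3) (Fin 3) ℂ) (t : ℤ → ℂ) (n : ℕ)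
    (hdet : ∀ i : ℤ, (colMat (V i) (V (i + 1)) (V (i + 2))).det = 1)
    (hM : IsUnit M.det)
    (hmon : ∀ i : ℤ, M.mulVec (V i) = t i • V (i + n)) (j : ℤ) : t j ≠ 0 := by
  have h := congrArg Matrix.det (M_mul_N V M t n hmon j)
  rw [Matrix.det_mul, Matrix.det_mul, hdet j, hdet (j+(n:ℤ)), Matrix.det_diagonal,
    Fin.prod_univ_three] at h
  simp only [Matrix.cons_val_zero, Matrix.cons_val_one, Matrix.head_cons, mul_one, one_mul,
    Matrix.cons_val_two, Matrix.tail_cons] at h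
  intro h0
  rw [h0] at h
  simp at h
  exact hM.ne_zero (by rw [h])

lemma periodicity (V : ℤ → Fin 3 → ℂ) (a b : ℤ → ℂ)
    (hdet : ∀ i : ℤ, (colMat (V i) (V (i + 1)) (V (i + 2))).det = 1)
    (hrec : ∀ i : ℤ, V (i + 3) = a i • V (i + 2) + b i • V (i + 1) + V i)
    (M : Matrix (Fin 3) (Fin 3) ℂ) (t : ℤ → ℂ) (n : ℕ)
    (hmon : ∀ i : ℤ, M.mulVec (V i) = t i • V (i + n)) (j : ℤ) :
    t j = t (j+3) ∧ b j * t (j+1) = t (j+3) * b (j+(n:ℤ))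
      ∧ a j * t (j+2) = t (j+3) * a (j+(n:ℤ)) := by
  set N := colMat (V (j+(n:ℤ))) (V (j+(n:ℤ)+1)) (V (j+(n:ℤ)+2)) with hNdef
  have hN : IsUnit N.det := by rw [hNdef, hdet]; exact isUnit_one
  have lhs : M.mulVec (V (j+3))
      = N.mulVec ![t j, b j * t (j+1), a j * t (j+2)] := by
    rw [hrec j, hNdef, colMat_mulVec]
    simp only [Matrix.mulVec_add, Matrix.mulVec_smul, hmon,
      Matrix.cons_val_zero, Matrix.cons_val_one, Matrix.head_cons,
      Matrix.cons_val_two, Matrix.tail_cons,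
      show j+2+(n:ℤ) = j+(n:ℤ)+2 from by ring, show j+1+(n:ℤ) = j+(n:ℤ)+1 from by ring]
    module
  have rhs : M.mulVec (V (j+3))
      = N.mulVec ![t (j+3), t (j+3) * b (j+(n:ℤ)), t (j+3) * a (j+(n:ℤ))] := by
    rw [hmon (j+3), show j+3+(n:ℤ) = j+(n:ℤ)+3 from by ring, hrec (j+(n:ℤ)), hNdef,
      colMat_mulVec]
    simp only [Matrix.cons_val_zero, Matrix.cons_val_one, Matrix.head_cons,
      Matrix.cons_val_two, Matrix.tail_cons]
    module
  have key : (![t j, b j * t (j+1), a j * t (j+2)] : Fin 3 → ℂ)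
      = ![t (j+3), t (j+3) * b (j+(n:ℤ)), t (j+3) * a (j+(n:ℤ))] := by
    have h := lhs.symm.trans rhs
    have h2 := congrArg (fun v => N⁻¹.mulVec v) h
    simpa [Matrix.mulVec_mulVec, Matrix.nonsing_inv_mul N hN, Matrix.one_mulVec] using h2
  exact ⟨congrFun key 0, congrFun key 1, congrFun key 2⟩

theorem monodromy_conjugate_to_product (n : ℕ) (hn : 1 ≤ n)
    (V : ℤ → Fin 3 → ℂ) (a b : ℤ → ℂ)
    (ha : ∀ i, a i ≠ 0) (hb : ∀ i, b i ≠ 0)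
    (hdet : ∀ i : ℤ, (colMat (V i) (V (i + 1)) (V (i + 2))).det = 1)
    (hrec : ∀ i : ℤ, V (i + 3) = a i • V (i + 2) + b i • V (i + 1) + V i)
    (M : Matrix (Fin 3) (Fin 3) ℂ) (hM : IsUnit M.det)
    (t : ℤ → ℂ) (hmon : ∀ i : ℤ, M.mulVec (V i) = t i • V (i + n)) :
    ∀ i : ℤ, ∃ c : ℂ, c ≠ 0 ∧ ∃ P : Matrix (Fin 3) (Fin 3) ℂ, IsUnit P.det ∧
      (List.ofFn fun k : Fin n => Lmat a b (i + (k : ℕ))).prod = c • (P⁻¹ * M * P) := by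
  intro i
  have ht : ∀ j, t j ≠ 0 := t_ne_zero V M t n hdet hM hmon
  -- the L-product identity
  obtain ⟨d', hd', hE⟩ := L_prod a b ha hb n i 1 one_ne_zero
  set E1 := Emat a b 1 i with hE1def
  set Dmat := Matrix.diagonal ![t (i-2), t (i-2+1), t (i-2+2)] with hDdef
  set N := colMat (V (i-2)) (V (i-2+1)) (V (i-2+2)) with hNdef
  have hNu : IsUnit N.det := by rw [hNdef, hdet]; exact isUnit_one
  have hE1u : IsUnit E1.det := Emat_isUnit a b ha hb 1 one_ne_zero i
  have hDu : IsUnit Dmat.det := by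
    rw [hDdef, Matrix.det_diagonal, Fin.prod_univ_three]
    simp only [Matrix.cons_val_zero, Matrix.cons_val_one, Matrix.head_cons,
      Matrix.cons_val_two, Matrix.tail_cons]
    exact ((((isUnit_iff_ne_zero.2 (ht _)).mul
      (isUnit_iff_ne_zero.2 (ht _)))).mul (isUnit_iff_ne_zero.2 (ht _)))
  -- T-product via N
  have hNP := N_prod V a b hrec n (i-2)
  have hMN := M_mul_N V M t n hmon (i-2)
  -- periodicity relations
  obtain ⟨hp1, hp2, hp3⟩ := periodicity V a b hdet hrec M t n hmon (i-2)
  rw [show i-2+3 = i+1 from by ring] at hp1 hp2 hp3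
  rw [show i-2+1 = i-1 from by ring] at hp2
  rw [show i-2+2 = i from by ring] at hp3
  rw [← hp1] at hp2 hp3
  -- the diagonal comparison
  have hD : Emat a b d' (i + (n:ℤ)) = (d' / t i) • (Dmat * E1) := by
    have e1 : i + (n:ℤ) - 2 = i - 2 + (n:ℤ) := by ring
    have e2 : i - 2 + 1 = i - 1 := by ring
    have e3 : i - 2 + 2 = i := by ring
    have hA : a (i-2+(n:ℤ)) = a (i-2) * t i / t (i-2) := by
      rw [eq_div_iff (ht _)]
      linear_combination -hp3
    have hB : b (i-2+(n:ℤ)) = b (i-2) * t (i-1) / t (i-2) := by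
      rw [eq_div_iff (ht _)]
      linear_combination -hp2
    rw [hE1def, hDdef, Emat, Emat, e1, e2, e3]
    ext p q
    fin_cases p <;> fin_cases q <;>
      simp [Matrix.diagonal_mul_diagonal, Matrix.diagonal, Matrix.mul_apply,
        Fin.sum_univ_three, hA, hB]
    all_goals (field_simp [ht]; try ring)
  -- express the T-product
  have hN' : colMat (V (i-2+(n:ℤ))) (V (i-2+(n:ℤ)+1)) (V (i-2+(n:ℤ)+2)) = M * N * Dmat⁻¹ := by
    rw [hMN, Matrix.mul_assoc, Matrix.mul_nonsing_inv _ hDu, Matrix.mul_one]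
  have hT : (List.ofFn fun k : Fin n => Tmat a b (i - 2 + (k : ℕ))).prod
      = N⁻¹ * (M * N * Dmat⁻¹) := by
    rw [← hN', ← hNP, ← Matrix.mul_assoc, Matrix.nonsing_inv_mul _ hNu, Matrix.one_mul]
  refine ⟨d' / t i, div_ne_zero hd' (ht i), N * E1, ?_, ?_⟩
  · rw [Matrix.det_mul]; exact hNu.mul hE1u
  · have hL : (List.ofFn fun k : Fin n => Lmat a b (i + (k : ℕ))).prod
        = E1⁻¹ * ((List.ofFn fun k : Fin n => Tmat a b (i - 2 + (k : ℕ))).prod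
            * Emat a b d' (i + (n:ℤ))) := by
      rw [← hE, ← Matrix.mul_assoc, Matrix.nonsing_inv_mul _ hE1u, Matrix.one_mul]
    rw [hL, hT, hD, Matrix.mul_inv_rev, Matrix.mul_smul, Matrix.mul_smul]
    congr 1
    simp only [Matrix.mul_assoc]
    rw [← Matrix.mul_assoc Dmat⁻¹ Dmat E1, Matrix.nonsing_inv_mul _ hDu, Matrix.one_mul]
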